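/- arXiv:0902.0614 — 5 statements merged into one kernel-verified Lean document; each statement's English description precedes it below -/
import Mathlib

section
/- Let G be a finite connected bipartite graph with parts V⁺ and V⁻ and a positive edge-weight function R with weights around each vertex summing to 2. Then for every subset A ⊆ V⁺ with A ≠ ∅ and A ≠ V⁺, the strict inequality |N(A)| > |A| holds. -/
open Finset

/-- The simple graph on `P ⊕ N` determined by the bipartite edge set `E ⊆ P × N`. -/
def tilingGraph {P N : Type*} (E : Finset (P × N)) : SimpleGraph (P ⊕ N) :=
  SimpleGraph.fromRel (fun a b => ∃ p n, (p, n) ∈ E ∧ a = Sum.inl p ∧ b = Sum.inr n)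

lemma mem_of_walk_closed {V : Type*} (G : SimpleGraph V) (S : Set V)
    (h : ∀ x ∈ S, ∀ y, G.Adj x y → y ∈ S) :
    ∀ {v w : V}, G.Walk v w → v ∈ S → w ∈ S := by
  intro v w wlk
  induction wlk with
  | nil => exact id
  | cons ha _ ih => intro hv; exact ih (h _ hv _ ha)

/-- In a finite connected bipartite graph with positive edge weights summing to
`2` around every vertex, every nonempty proper subset `A` of white vertices satisfies the
strict Hall inequality `|A| < |N(A)|`. -/
theorem strict_hall_condition {P N : Type*} [Fintype P] [Fintype N]
    [DecidableEq P] [DecidableEq N]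
    (E : Finset (P × N)) (R : P × N → ℝ)
    (hconn : (tilingGraph E).Connected)
    (hpos : ∀ e ∈ E, 0 < R e)
    (hwhite : ∀ p : P, ∑ e ∈ E.filter (fun e => e.1 = p), R e = 2)
    (hblack : ∀ n : N, ∑ e ∈ E.filter (fun e => e.2 = n), R e = 2)
    (A : Finset P) (hne : A.Nonempty) (hproper : A ≠ Finset.univ) :
    A.card < ((E.filter (fun e => e.1 ∈ A)).image Prod.snd).card := by
  set B := (E.filter (fun e => e.1 ∈ A)).image Prod.snd with hB
  -- sum over edges out of A
  have hsumA : ∑ e ∈ E.filter (fun e => e.1 ∈ A), R e = 2 * A.card := by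
    have h1 : ∑ p ∈ A, ∑ e ∈ (E.filter (fun e => e.1 ∈ A)).filter (fun e => e.1 = p), R e
        = ∑ e ∈ E.filter (fun e => e.1 ∈ A), R e :=
      Finset.sum_fiberwise_of_maps_to (fun e he => (Finset.mem_filter.mp he).2) R
    rw [← h1]
    rw [Finset.sum_congr rfl (fun p hp => ?_)]
    · rw [Finset.sum_const, nsmul_eq_mul, mul_comm]
    · rw [Finset.filter_filter]
      have : Finset.filter (fun e => e.1 ∈ A ∧ e.1 = p) E = Finset.filter (fun e => e.1 = p) E := by
        apply Finset.filter_congr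
        intro e _
        constructor
        · exact fun h => h.2
        · exact fun h => ⟨h ▸ hp, h⟩
      rw [this, hwhite p]
  have hsumB : ∑ e ∈ E.filter (fun e => e.2 ∈ B), R e = 2 * B.card := by
    have h1 : ∑ n ∈ B, ∑ e ∈ (E.filter (fun e => e.2 ∈ B)).filter (fun e => e.2 = n), R e
        = ∑ e ∈ E.filter (fun e => e.2 ∈ B), R e :=
      Finset.sum_fiberwise_of_maps_to (fun e he => (Finset.mem_filter.mp he).2) R
    rw [← h1]
    rw [Finset.sum_congr rfl (fun n hn => ?_)]
    · rw [Finset.sum_const, nsmul_eq_mul, mul_comm]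
    · rw [Finset.filter_filter]
      have : Finset.filter (fun e => e.2 ∈ B ∧ e.2 = n) E = Finset.filter (fun e => e.2 = n) E := by
        apply Finset.filter_congr
        intro e _
        constructor
        · exact fun h => h.2
        · exact fun h => ⟨h ▸ hn, h⟩
      rw [this, hblack n]
  have hsub : E.filter (fun e => e.1 ∈ A) ⊆ E.filter (fun e => e.2 ∈ B) := by
    intro e he
    rw [Finset.mem_filter] at he ⊢
    exact ⟨he.1, Finset.mem_image.mpr ⟨e, Finset.mem_filter.mpr he, rfl⟩⟩
  -- find an edge into B not from A, using connectedness
  have hex : ∃ e ∈ E, e.2 ∈ B ∧ e.1 ∉ A := by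
    by_contra hc
    push_neg at hc
    set S : Set (P ⊕ N) := fun v => match v with
      | Sum.inl p => p ∈ A
      | Sum.inr n => n ∈ B with hS
    have hclosed : ∀ x ∈ S, ∀ y, (tilingGraph E).Adj x y → y ∈ S := by
      intro x hx y hadj
      rw [tilingGraph, SimpleGraph.fromRel_adj] at hadj
      rcases hadj.2 with ⟨p, n, hpn, hx', hy'⟩ | ⟨p, n, hpn, hy', hx'⟩
      · subst hx' hy'
        have hp : p ∈ A := hx
        exact Finset.mem_image.mpr ⟨(p, n), Finset.mem_filter.mpr ⟨hpn, hp⟩, rfl⟩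
      · subst hx' hy'
        have hn : n ∈ B := hx
        exact hc (p, n) hpn hn
    obtain ⟨a0, ha0⟩ := hne
    obtain ⟨p, hp⟩ := show ∃ p, p ∉ A by simpa using (fun h => hproper (Finset.eq_univ_iff_forall.mpr h))
    obtain ⟨wlk⟩ := hconn.preconnected (Sum.inl a0) (Sum.inl p)
    exact hp (mem_of_walk_closed _ S hclosed wlk ha0)
  obtain ⟨e, heE, heB, heA⟩ := hex
  have hlt : ∑ e ∈ E.filter (fun e => e.1 ∈ A), R e < ∑ e ∈ E.filter (fun e => e.2 ∈ B), R e := by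
    apply Finset.sum_lt_sum_of_subset hsub (i := e)
    · exact Finset.mem_filter.mpr ⟨heE, heB⟩
    · simp [heA]
    · exact hpos e heE
    · intro j hj _
      exact (hpos j (Finset.mem_filter.mp hj).1).le
  rw [hsumA, hsumB] at hlt
  have : (A.card : ℝ) < B.card := by linarith
  exact_mod_cast this
end

section
/- Let G be a finite connected bipartite graph with parts V⁺ and V⁻ and a positive edge-weight function R with weights around each vertex summing to 2. Then G is non-degenerate: for every edge e of G, there exists a perfect matching M of G with e ∈ M. -/
open Finset

/-- A perfect matching of the bipartite graph with edge set `E ⊆ P × N`. -/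
def IsPerfectMatching {P N : Type*} [DecidableEq P] [DecidableEq N]
    (E M : Finset (P × N)) : Prop :=
  M ⊆ E ∧ (∀ p : P, (M.filter (fun e => e.1 = p)).card = 1) ∧
    (∀ n : N, (M.filter (fun e => e.2 = n)).card = 1)

section Aux

variable {P N : Type*} [Fintype P] [Fintype N] [DecidableEq P] [DecidableEq N]
  (E : Finset (P × N)) (R : P × N → ℝ)

/-- neighborhood of a set of white vertices -/
def nbr (s : Finset P) : Finset N := (E.filter fun e => e.1 ∈ s).image Prod.snd

lemma sum_left (s : Finset P) :
    ∑ p ∈ s, ∑ e ∈ E.filter (fun e => e.1 = p), R e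
      = ∑ e ∈ E.filter (fun e => e.1 ∈ s), R e := by
  rw [← Finset.sum_fiberwise_of_maps_to (g := Prod.fst) (t := s)
    (fun e he => (mem_filter.1 he).2) R]
  refine Finset.sum_congr rfl fun p hp => Finset.sum_congr ?_ fun _ _ => rfl
  rw [Finset.filter_filter]
  exact Finset.filter_congr fun e _ => by
    constructor
    · rintro rfl; exact ⟨hp, rfl⟩
    · rintro ⟨-, rfl⟩; rfl

lemma sum_right (t : Finset N) :
    ∑ n ∈ t, ∑ e ∈ E.filter (fun e => e.2 = n), R e
      = ∑ e ∈ E.filter (fun e => e.2 ∈ t), R e := by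
  rw [← Finset.sum_fiberwise_of_maps_to (g := Prod.snd) (t := t)
    (fun e he => (mem_filter.1 he).2) R]
  refine Finset.sum_congr rfl fun n hn => Finset.sum_congr ?_ fun _ _ => rfl
  rw [Finset.filter_filter]
  exact Finset.filter_congr fun e _ => by
    constructor
    · rintro rfl; exact ⟨hn, rfl⟩
    · rintro ⟨-, rfl⟩; rfl

lemma mem_nbr {s : Finset P} {n : N} :
    n ∈ nbr E s ↔ ∃ p ∈ s, (p, n) ∈ E := by
  simp only [nbr, mem_image, mem_filter]
  constructor
  · rintro ⟨⟨p, m⟩, ⟨hE, hs⟩, rfl⟩; exact ⟨p, hs, hE⟩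
  · rintro ⟨p, hs, hE⟩; exact ⟨(p, n), ⟨hE, hs⟩, rfl⟩

/-- connectivity: a nonempty "closed" set of white vertices is everything -/
lemma closed_univ (hconn : (tilingGraph E).Connected)
    {s : Finset P} (hne : s.Nonempty)
    (hclosed : ∀ e ∈ E, e.2 ∈ nbr E s → e.1 ∈ s) (p : P) : p ∈ s := by
  classical
  obtain ⟨p₁, hp₁⟩ := hne
  have step : ∀ {a b : P ⊕ N}, (tilingGraph E).Adj a b →
      (∀ q, a = Sum.inl q → q ∈ s) ∧ (∀ m, a = Sum.inr m → m ∈ nbr E s) →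
      (∀ q, b = Sum.inl q → q ∈ s) ∧ (∀ m, b = Sum.inr m → m ∈ nbr E s) := by
    rintro a b hab ha
    rw [tilingGraph, SimpleGraph.fromRel_adj] at hab
    obtain ⟨-, ⟨q, m, hE, rfl, rfl⟩ | ⟨q, m, hE, rfl, rfl⟩⟩ := hab
    · constructor
      · intro q' hq'; exact absurd hq' (by simp)
      · intro m' hm'
        obtain rfl : m = m' := by injection hm'
        exact (mem_nbr E).2 ⟨q, ha.1 q rfl, hE⟩
    · constructor
      · intro q' hq'
        obtain rfl : q = q' := by injection hq'
        exact hclosed (q, m) hE (ha.2 m rfl)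
      · intro m' hm'; exact absurd hm' (by simp)
  obtain ⟨w⟩ := hconn.preconnected (Sum.inl p₁) (Sum.inl p)
  have main : ∀ {a b : P ⊕ N} (_ : (tilingGraph E).Walk a b),
      (∀ q, a = Sum.inl q → q ∈ s) ∧ (∀ m, a = Sum.inr m → m ∈ nbr E s) →
      (∀ q, b = Sum.inl q → q ∈ s) ∧ (∀ m, b = Sum.inr m → m ∈ nbr E s) := by
    intro a b w
    induction w with
    | nil => exact id
    | cons h _ ih => exact fun ha => ih (step h ha)
  exact (main w ⟨fun q hq => by cases hq; exact hp₁, fun m hm => by cases hm⟩).1 p rfl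

/-- weak Hall via weights, and strictness for proper sets -/
lemma hall_weak (hpos : ∀ e ∈ E, 0 < R e)
    (hwhite : ∀ p : P, ∑ e ∈ E.filter (fun e => e.1 = p), R e = 2)
    (hblack : ∀ n : N, ∑ e ∈ E.filter (fun e => e.2 = n), R e = 2)
    (s : Finset P) : s.card ≤ (nbr E s).card := by
  have hsub : E.filter (fun e => e.1 ∈ s) ⊆ E.filter (fun e => e.2 ∈ nbr E s) := by
    intro e he
    rw [mem_filter] at he ⊢
    exact ⟨he.1, (mem_nbr E).2 ⟨e.1, he.2, he.1⟩⟩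
  have h1 : (2 : ℝ) * s.card = ∑ e ∈ E.filter (fun e => e.1 ∈ s), R e := by
    rw [← sum_left]
    simp [hwhite, mul_comm]
  have h2 : (2 : ℝ) * (nbr E s).card = ∑ e ∈ E.filter (fun e => e.2 ∈ nbr E s), R e := by
    rw [← sum_right]
    simp [hblack, mul_comm]
  have hle : (2 : ℝ) * s.card ≤ 2 * (nbr E s).card := by
    rw [h1, h2]
    exact Finset.sum_le_sum_of_subset_of_nonneg hsub
      (fun e he _ => (hpos e (mem_filter.1 he).1).le)
  have : (s.card : ℝ) ≤ (nbr E s).card := by linarith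
  exact_mod_cast this

lemma hall_strict (hconn : (tilingGraph E).Connected) (hpos : ∀ e ∈ E, 0 < R e)
    (hwhite : ∀ p : P, ∑ e ∈ E.filter (fun e => e.1 = p), R e = 2)
    (hblack : ∀ n : N, ∑ e ∈ E.filter (fun e => e.2 = n), R e = 2)
    {s : Finset P} (hne : s.Nonempty) {p₀ : P} (hp₀ : p₀ ∉ s) :
    s.card < (nbr E s).card := by
  classical
  by_cases hcl : ∀ e ∈ E, e.2 ∈ nbr E s → e.1 ∈ s
  · exact absurd (closed_univ E hconn hne hcl p₀) hp₀
  push_neg at hcl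
  obtain ⟨e₀, he₀E, he₀n, he₀p⟩ := hcl
  have hsub : E.filter (fun e => e.1 ∈ s) ⊆ E.filter (fun e => e.2 ∈ nbr E s) := by
    intro e he
    rw [mem_filter] at he ⊢
    exact ⟨he.1, (mem_nbr E).2 ⟨e.1, he.2, he.1⟩⟩
  have h1 : (2 : ℝ) * s.card = ∑ e ∈ E.filter (fun e => e.1 ∈ s), R e := by
    rw [← sum_left]
    simp [hwhite, mul_comm]
  have h2 : (2 : ℝ) * (nbr E s).card = ∑ e ∈ E.filter (fun e => e.2 ∈ nbr E s), R e := by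
    rw [← sum_right]
    simp [hblack, mul_comm]
  have hlt : (2 : ℝ) * s.card < 2 * (nbr E s).card := by
    rw [h1, h2]
    refine Finset.sum_lt_sum_of_subset hsub (i := e₀) (by simp [he₀E, he₀n]) (by simp [he₀p])
      (hpos e₀ he₀E) (fun e he _ => (hpos e (mem_filter.1 he).1).le)
  have : (s.card : ℝ) < (nbr E s).card := by linarith
  exact_mod_cast this

lemma card_eq (hwhite : ∀ p : P, ∑ e ∈ E.filter (fun e => e.1 = p), R e = 2)
    (hblack : ∀ n : N, ∑ e ∈ E.filter (fun e => e.2 = n), R e = 2) :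
    Fintype.card P = Fintype.card N := by
  have h1 : (Fintype.card P : ℝ) * 2 = ∑ e ∈ E, R e := by
    have h := sum_left E R Finset.univ
    simpa [hwhite, Finset.filter_true_of_mem, Finset.card_univ] using h
  have h2 : (Fintype.card N : ℝ) * 2 = ∑ e ∈ E, R e := by
    have h := sum_right E R Finset.univ
    simpa [hblack, Finset.filter_true_of_mem, Finset.card_univ] using h
  have : (Fintype.card P : ℝ) = Fintype.card N := by linarith
  exact_mod_cast this

end Aux


/-- A finite connected bipartite graph with positive edge weights summing to `2`
around every vertex is non-degenerate: every edge belongs to some perfect matching. -/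
theorem physical_tiling_nondegenerate {P N : Type*} [Fintype P] [Fintype N]
    [DecidableEq P] [DecidableEq N]
    (E : Finset (P × N)) (R : P × N → ℝ)
    (hconn : (tilingGraph E).Connected)
    (hpos : ∀ e ∈ E, 0 < R e)
    (hwhite : ∀ p : P, ∑ e ∈ E.filter (fun e => e.1 = p), R e = 2)
    (hblack : ∀ n : N, ∑ e ∈ E.filter (fun e => e.2 = n), R e = 2) :
    ∀ e ∈ E, ∃ M : Finset (P × N), IsPerfectMatching E M ∧ e ∈ M := by
  classical
  rintro ⟨p₀, n₀⟩ he
  -- the modified neighbor sets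
  set t : P → Finset N := fun p => if p = p₀ then {n₀} else (nbr E {p}).erase n₀ with ht
  have hallcond : ∀ s : Finset P, s.card ≤ (s.biUnion t).card := by
    intro s
    by_cases hp₀s : p₀ ∈ s
    · obtain ⟨s', hps', rfl⟩ : ∃ s', p₀ ∉ s' ∧ s = insert p₀ s' :=
        ⟨s.erase p₀, Finset.notMem_erase _ _, (Finset.insert_erase hp₀s).symm⟩
      have htp₀ : t p₀ = {n₀} := by simp [ht]
      have hsplit : (insert p₀ s').biUnion t = insert n₀ (s'.biUnion t) := by
        rw [Finset.biUnion_insert, htp₀, ← Finset.insert_eq]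
      have hn₀ : n₀ ∉ s'.biUnion t := by
        simp only [Finset.mem_biUnion, not_exists]
        rintro q ⟨hq, hqn⟩
        have hq' : q ≠ p₀ := by rintro rfl; exact hps' hq
        have hmem : n₀ ∈ (nbr E {q}).erase n₀ := by simpa [ht, hq'] using hqn
        exact (Finset.mem_erase.1 hmem).1 rfl
      rw [hsplit, Finset.card_insert_of_notMem hn₀, Finset.card_insert_of_notMem hps']
      have hmain : s'.card ≤ (s'.biUnion t).card := by
        rcases Finset.eq_empty_or_nonempty s' with h | h
        · simp [h]
        have hsup : (nbr E s').erase n₀ ⊆ s'.biUnion t := by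
          intro n hn
          obtain ⟨hne, hn⟩ := Finset.mem_erase.1 hn
          obtain ⟨q, hq, hqE⟩ := (mem_nbr E).1 hn
          refine Finset.mem_biUnion.2 ⟨q, hq, ?_⟩
          have hq' : q ≠ p₀ := by rintro rfl; exact hps' hq
          simp only [ht, if_neg hq']
          exact Finset.mem_erase.2 ⟨hne, (mem_nbr E).2 ⟨q, Finset.mem_singleton_self q, hqE⟩⟩
        have hlt := hall_strict E R hconn hpos hwhite hblack h hps'
        have herase : (nbr E s').card ≤ ((nbr E s').erase n₀).card + 1 := by
          rcases em (n₀ ∈ nbr E s') with h' | h'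
          · rw [Finset.card_erase_of_mem h']; omega
          · rw [Finset.erase_eq_of_notMem h']; omega
        have := Finset.card_le_card hsup
        omega
      omega
    · -- p₀ ∉ s
      rcases Finset.eq_empty_or_nonempty s with h | h
      · simp [h]
      have hsup : (nbr E s).erase n₀ ⊆ s.biUnion t := by
        intro n hn
        obtain ⟨hne, hn⟩ := Finset.mem_erase.1 hn
        obtain ⟨q, hq, hqE⟩ := (mem_nbr E).1 hn
        refine Finset.mem_biUnion.2 ⟨q, hq, ?_⟩
        have hq' : q ≠ p₀ := fun hqq => hp₀s (hqq ▸ hq)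
        simp only [ht, if_neg hq']
        exact Finset.mem_erase.2 ⟨hne, (mem_nbr E).2 ⟨q, Finset.mem_singleton_self q, hqE⟩⟩
      have hlt := hall_strict E R hconn hpos hwhite hblack h hp₀s
      have herase : (nbr E s).card ≤ ((nbr E s).erase n₀).card + 1 := by
        rcases em (n₀ ∈ nbr E s) with h' | h'
        · rw [Finset.card_erase_of_mem h']; omega
        · rw [Finset.erase_eq_of_notMem h']; omega
      have := Finset.card_le_card hsup
      omega
  obtain ⟨f, hfinj, hft⟩ := (Finset.all_card_le_biUnion_card_iff_exists_injective t).1 hallcond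
  have hfbij : Function.Bijective f :=
    (Fintype.bijective_iff_injective_and_card f).2 ⟨hfinj, card_eq E R hwhite hblack⟩
  have hfE : ∀ p, (p, f p) ∈ E := by
    intro p
    have := hft p
    by_cases hp : p = p₀
    · subst hp
      simp only [ht, if_pos rfl, Finset.mem_singleton] at this
      rw [this]; exact he
    · simp only [ht, if_neg hp] at this
      obtain ⟨q, hq, hqE⟩ := (mem_nbr E).1 (Finset.mem_of_mem_erase this)
      rw [Finset.mem_singleton] at hq
      subst hq
      exact hqE
  have hfp₀ : f p₀ = n₀ := by
    have := hft p₀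
    simpa [ht] using this
  refine ⟨Finset.univ.image (fun p => (p, f p)), ⟨?_, ?_, ?_⟩, ?_⟩
  · intro e heM
    obtain ⟨p, -, rfl⟩ := Finset.mem_image.1 heM
    exact hfE p
  · intro p
    have : (Finset.univ.image (fun p => (p, f p))).filter (fun e => e.1 = p) = {(p, f p)} := by
      ext e
      simp only [Finset.mem_filter, Finset.mem_image, Finset.mem_singleton]
      constructor
      · rintro ⟨⟨q, -, rfl⟩, hq⟩
        simp only at hq
        subst hq; rfl
      · rintro rfl
        exact ⟨⟨p, Finset.mem_univ p, rfl⟩, rfl⟩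
    rw [this, Finset.card_singleton]
  · intro n
    obtain ⟨p, hp⟩ := hfbij.2 n
    have : (Finset.univ.image (fun p => (p, f p))).filter (fun e => e.2 = n) = {(p, f p)} := by
      ext e
      simp only [Finset.mem_filter, Finset.mem_image, Finset.mem_singleton]
      constructor
      · rintro ⟨⟨q, -, rfl⟩, hq⟩
        simp only at hq
        have : q = p := hfinj (by rw [hq, hp])
        subst this; rfl
      · rintro rfl
        exact ⟨⟨p, Finset.mem_univ p, rfl⟩, hp⟩
    rw [this, Finset.card_singleton]
  · exact Finset.mem_image.2 ⟨p₀, Finset.mem_univ p₀, by rw [hfp₀]⟩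
end

section
/- Let G be a finite bipartite graph with parts V⁺ and V⁻ and a positive edge-weight function R with edge weights around each vertex summing to 2. If A ⊆ V⁺ satisfies |N(A)| = |A|, then every edge incident to a vertex of N(A) has its white endpoint in A; in particular N(N(A)) = A. -/
open Finset

/-- Equality case of the weighted Hall argument: if `|N(A)| = |A|`, then every
edge incident to a black vertex of `N(A)` has its white endpoint in `A`; in particular
`N(N(A)) = A`. -/
theorem hall_equality_case {P N : Type*} [Fintype P] [Fintype N]
    [DecidableEq P] [DecidableEq N]
    (E : Finset (P × N)) (R : P × N → ℝ)
    (hpos : ∀ e ∈ E, 0 < R e)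
    (hwhite : ∀ p : P, ∑ e ∈ E.filter (fun e => e.1 = p), R e = 2)
    (hblack : ∀ n : N, ∑ e ∈ E.filter (fun e => e.2 = n), R e = 2)
    (A : Finset P)
    (heq : ((E.filter (fun e => e.1 ∈ A)).image Prod.snd).card = A.card) :
    (∀ e ∈ E, e.2 ∈ (E.filter (fun e => e.1 ∈ A)).image Prod.snd → e.1 ∈ A) ∧
    (E.filter (fun e => e.2 ∈ (E.filter (fun e' => e'.1 ∈ A)).image Prod.snd)).image Prod.fst
      = A := by
  set NA : Finset N := (E.filter (fun e => e.1 ∈ A)).image Prod.snd with hNA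
  set S1 : Finset (P × N) := E.filter (fun e => e.1 ∈ A) with hS1
  set S2 : Finset (P × N) := E.filter (fun e => e.2 ∈ NA) with hS2
  have hsub : S1 ⊆ S2 := by
    intro e he
    simp only [hS1, hS2, mem_filter] at he ⊢
    exact ⟨he.1, mem_image.2 ⟨e, mem_filter.2 he, rfl⟩⟩
  have hsum1 : ∑ e ∈ S1, R e = 2 * A.card := by
    rw [← Finset.sum_fiberwise_of_maps_to (g := Prod.fst) (t := A)
      (fun e he => (mem_filter.1 he).2)]
    rw [Finset.sum_congr rfl (fun p hp => ?_)]
    · rw [Finset.sum_const, nsmul_eq_mul, mul_comm]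
    · rw [Finset.filter_filter]
      rw [show (E.filter fun e => e.1 ∈ A ∧ e.1 = p) = E.filter fun e => e.1 = p from
        Finset.filter_congr (fun e _ => by constructor <;> intro h <;> simp_all)]
      exact hwhite p
  have hsum2 : ∑ e ∈ S2, R e = 2 * NA.card := by
    rw [← Finset.sum_fiberwise_of_maps_to (g := Prod.snd) (t := NA)
      (fun e he => (mem_filter.1 he).2)]
    rw [Finset.sum_congr rfl (fun n hn => ?_)]
    · rw [Finset.sum_const, nsmul_eq_mul, mul_comm]
    · rw [Finset.filter_filter]
      rw [show (E.filter fun e => e.2 ∈ NA ∧ e.2 = n) = E.filter fun e => e.2 = n from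
        Finset.filter_congr (fun e _ => by constructor <;> intro h <;> simp_all)]
      exact hblack n
  have hdiff : ∑ e ∈ S2 \ S1, R e = 0 := by
    have := Finset.sum_sdiff (f := R) hsub
    rw [hsum1, hsum2, heq] at this
    linarith
  have hS12 : ∀ e ∈ E, e.2 ∈ NA → e.1 ∈ A := by
    intro e he hne
    by_contra hA
    have hmem : e ∈ S2 \ S1 := by
      simp only [hS1, hS2, mem_sdiff, mem_filter]
      exact ⟨⟨he, hne⟩, fun h => hA h.2⟩
    have hposs : 0 < ∑ e ∈ S2 \ S1, R e :=
      Finset.sum_pos' (fun x hx => (hpos x (mem_filter.1 (mem_sdiff.1 hx).1).1).le)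
        ⟨e, hmem, hpos e he⟩
    linarith
  refine ⟨hS12, ?_⟩
  ext p
  simp only [hS2, hNA, hS1, mem_image, mem_filter]
  constructor
  · rintro ⟨e, ⟨he, hne⟩, rfl⟩
    exact hS12 e he (by
      obtain ⟨a, ⟨ha1, ha2⟩, ha3⟩ := hne
      exact mem_image.2 ⟨a, mem_filter.2 ⟨ha1, ha2⟩, ha3⟩)
  · intro hp
    have hne : (E.filter (fun e => e.1 = p)).Nonempty := by
      by_contra h
      rw [not_nonempty_iff_eq_empty] at h
      have := hwhite p
      rw [h, Finset.sum_empty] at this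
      norm_num at this
    obtain ⟨e, he⟩ := hne
    rw [mem_filter] at he
    exact ⟨e, ⟨he.1, ⟨e, ⟨he.1, he.2 ▸ hp⟩, rfl⟩⟩, he.2⟩
end

section
/- Let G be a finite bipartite graph with parts V⁺ and V⁻ together with a face structure: a collection F of closed walks (faces) such that each edge of G lies in exactly two faces. Suppose R : E → ℝ satisfies ∑_{e ∋ v} R(e) = 2 for every vertex and ∑_{e ∈ ∂f} R(e) = |∂f| − 2 for every face f ∈ F. Then |V⁺| + |V⁻| − |E| + |F| = 0. -/
open Finset

lemma double_count' {P N F : Type*} [Fintype F] [DecidableEq P] [DecidableEq N]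
    (E : Finset (P × N)) (bd : F → Finset (P × N)) (g : P × N → ℝ)
    (hbd : ∀ f : F, bd f ⊆ E)
    (htwo : ∀ e ∈ E, (Finset.univ.filter (fun f : F => e ∈ bd f)).card = 2) :
    ∑ f : F, ∑ e ∈ bd f, g e = 2 * ∑ e ∈ E, g e := by
  classical
  have h1 : ∀ f : F, ∑ e ∈ bd f, g e = ∑ e ∈ E, if e ∈ bd f then g e else 0 := by
    intro f
    rw [← Finset.sum_filter]
    congr 1
    ext e
    simp only [mem_filter]
    exact ⟨fun h => ⟨hbd f h, h⟩, fun h => h.2⟩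
  simp_rw [h1]
  rw [Finset.sum_comm]
  rw [Finset.mul_sum]
  refine Finset.sum_congr rfl fun e he => ?_
  rw [← Finset.sum_filter, Finset.sum_const, htwo e he]
  ring

/-- Abstract conformality conditions force vanishing Euler characteristic:
if `R` sums to `2` around every vertex and to `|∂f| - 2` around every face, each edge lying
in exactly two faces, then `|V⁺| + |V⁻| - |E| + |F| = 0`. -/
theorem euler_characteristic_zero' {P N F : Type*}
    [Fintype P] [Fintype N] [Fintype F]
    [DecidableEq P] [DecidableEq N]
    (E : Finset (P × N)) (bd : F → Finset (P × N)) (R : P × N → ℝ)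
    (hbd : ∀ f : F, bd f ⊆ E)
    (htwo : ∀ e ∈ E, (Finset.univ.filter (fun f : F => e ∈ bd f)).card = 2)
    (hwhite : ∀ p : P, ∑ e ∈ E.filter (fun e => e.1 = p), R e = 2)
    (hblack : ∀ n : N, ∑ e ∈ E.filter (fun e => e.2 = n), R e = 2)
    (hface : ∀ f : F, ∑ e ∈ bd f, R e = ((bd f).card : ℝ) - 2) :
    (Fintype.card P + Fintype.card N : ℤ) - E.card + Fintype.card F = 0 := by
  classical
  set S := ∑ e ∈ E, R e with hS
  have hP : S = 2 * Fintype.card P := by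
    rw [hS, ← Finset.sum_fiberwise E (fun e => e.1) R]
    simp [hwhite, mul_comm]
  have hN : S = 2 * Fintype.card N := by
    rw [hS, ← Finset.sum_fiberwise E (fun e => e.2) R]
    simp [hblack, mul_comm]
  have hR2 : ∑ f : F, ∑ e ∈ bd f, R e = 2 * S := double_count' E bd R hbd htwo
  have hone : ∑ f : F, ∑ _e ∈ bd f, (1 : ℝ) = 2 * ∑ _e ∈ E, (1 : ℝ) :=
    double_count' E bd (fun _ => 1) hbd htwo
  simp only [Finset.sum_const, nsmul_eq_mul, mul_one] at hone
  have hF : (2 : ℝ) * S = 2 * E.card - 2 * Fintype.card F := by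
    rw [← hR2]
    simp_rw [hface]
    rw [Finset.sum_sub_distrib, hone, Finset.sum_const, Finset.card_univ]
    ring
  have : (Fintype.card P + Fintype.card N - E.card + Fintype.card F : ℝ) = 0 := by
    nlinarith [hP, hN, hF]
  exact_mod_cast this
end

section
/- Let G be a finite bipartite graph with parts V⁺ and V⁻ admitting a positive edge weight function R with vertex sums equal to 2, and assume G is connected with at least 4 vertices. Then G has at least two distinct perfect matchings. -/
open Finset

section Aux

variable {P N : Type*} [Fintype P] [Fintype N] [DecidableEq P] [DecidableEq N]

/-- The neighbor set of `p` in the bipartite edge set `E`. -/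
def nbrs (E : Finset (P × N)) (p : P) : Finset N :=
  (E.filter (fun e => e.1 = p)).image Prod.snd

lemma mem_nbrs {E : Finset (P × N)} {p : P} {n : N} :
    n ∈ nbrs E p ↔ (p, n) ∈ E := by
  constructor
  · rintro h
    simp only [nbrs, mem_image, mem_filter] at h
    obtain ⟨e, ⟨heE, he1⟩, he2⟩ := h
    have : e = (p, n) := Prod.ext he1 he2
    rwa [← this]
  · intro h
    simp only [nbrs, mem_image, mem_filter]
    exact ⟨(p, n), ⟨h, rfl⟩, rfl⟩

lemma sum_filter_fst (E : Finset (P × N)) (R : P × N → ℝ)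
    (hwhite : ∀ p : P, ∑ e ∈ E.filter (fun e => e.1 = p), R e = 2)
    (S : Finset P) :
    ∑ e ∈ E.filter (fun e => e.1 ∈ S), R e = 2 * S.card := by
  rw [← Finset.sum_fiberwise_eq_sum_filter E S Prod.fst R]
  rw [Finset.sum_congr rfl (fun p _ => hwhite p), Finset.sum_const, nsmul_eq_mul, mul_comm]

lemma sum_filter_snd (E : Finset (P × N)) (R : P × N → ℝ)
    (hblack : ∀ n : N, ∑ e ∈ E.filter (fun e => e.2 = n), R e = 2)
    (T : Finset N) :
    ∑ e ∈ E.filter (fun e => e.2 ∈ T), R e = 2 * T.card := by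
  rw [← Finset.sum_fiberwise_eq_sum_filter E T Prod.snd R]
  rw [Finset.sum_congr rfl (fun n _ => hblack n), Finset.sum_const, nsmul_eq_mul, mul_comm]

lemma subset_filter_snd (E : Finset (P × N)) (S : Finset P) {T : Finset N}
    (hT : ∀ p ∈ S, nbrs E p ⊆ T) :
    E.filter (fun e => e.1 ∈ S) ⊆ E.filter (fun e => e.2 ∈ T) := by
  intro e he
  rw [mem_filter] at he ⊢
  refine ⟨he.1, hT e.1 he.2 ?_⟩
  rw [mem_nbrs]
  exact he.1

/-- Basic Hall-type inequality. -/
lemma hall_basic (E : Finset (P × N)) (R : P × N → ℝ)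
    (hpos : ∀ e ∈ E, 0 < R e)
    (hwhite : ∀ p : P, ∑ e ∈ E.filter (fun e => e.1 = p), R e = 2)
    (hblack : ∀ n : N, ∑ e ∈ E.filter (fun e => e.2 = n), R e = 2)
    (S : Finset P) : S.card ≤ (S.biUnion (nbrs E)).card := by
  set T := S.biUnion (nbrs E) with hTdef
  have h1 : ∑ e ∈ E.filter (fun e => e.1 ∈ S), R e = 2 * S.card :=
    sum_filter_fst E R hwhite S
  have h2 : ∑ e ∈ E.filter (fun e => e.2 ∈ T), R e = 2 * T.card :=
    sum_filter_snd E R hblack T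
  have hsub : E.filter (fun e => e.1 ∈ S) ⊆ E.filter (fun e => e.2 ∈ T) :=
    subset_filter_snd E S (fun p hp => Finset.subset_biUnion_of_mem (nbrs E) hp)
  have hle : (2 : ℝ) * S.card ≤ 2 * T.card := by
    rw [← h1, ← h2]
    exact Finset.sum_le_sum_of_subset_of_nonneg hsub
      (fun e he _ => le_of_lt (hpos e (mem_filter.1 he).1))
  have := (mul_le_mul_iff_right₀ (by norm_num : (0:ℝ) < 2)).1 hle
  exact_mod_cast this

/-- Strict Hall inequality for sets avoiding `e0.1` whose neighborhood contains `e0.2`. -/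
lemma hall_strict_s12 (E : Finset (P × N)) (R : P × N → ℝ)
    (hpos : ∀ e ∈ E, 0 < R e)
    (hwhite : ∀ p : P, ∑ e ∈ E.filter (fun e => e.1 = p), R e = 2)
    (hblack : ∀ n : N, ∑ e ∈ E.filter (fun e => e.2 = n), R e = 2)
    {e0 : P × N} (he0 : e0 ∈ E)
    {S : Finset P} (hS : e0.1 ∉ S) (hn0 : e0.2 ∈ S.biUnion (nbrs E)) :
    S.card < (S.biUnion (nbrs E)).card := by
  set T := S.biUnion (nbrs E) with hTdef
  have h1 : ∑ e ∈ E.filter (fun e => e.1 ∈ S), R e = 2 * S.card :=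
    sum_filter_fst E R hwhite S
  have h2 : ∑ e ∈ E.filter (fun e => e.2 ∈ T), R e = 2 * T.card :=
    sum_filter_snd E R hblack T
  have hsub : E.filter (fun e => e.1 ∈ S) ⊆ E.filter (fun e => e.2 ∈ T) :=
    subset_filter_snd E S (fun p hp => Finset.subset_biUnion_of_mem (nbrs E) hp)
  have he0T : e0 ∈ E.filter (fun e => e.2 ∈ T) := mem_filter.2 ⟨he0, hn0⟩
  have he0S : e0 ∉ E.filter (fun e => e.1 ∈ S) := by
    rw [mem_filter]; rintro ⟨_, h⟩; exact hS h
  have hlt : (2 : ℝ) * S.card < 2 * T.card := by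
    rw [← h1, ← h2]
    exact Finset.sum_lt_sum_of_subset hsub he0T he0S (hpos e0 he0)
      (fun e he _ => le_of_lt (hpos e (mem_filter.1 he).1))
  have := (mul_lt_mul_iff_right₀ (by norm_num : (0:ℝ) < 2)).1 hlt
  exact_mod_cast this

lemma card_P_eq_card_N (E : Finset (P × N)) (R : P × N → ℝ)
    (hwhite : ∀ p : P, ∑ e ∈ E.filter (fun e => e.1 = p), R e = 2)
    (hblack : ∀ n : N, ∑ e ∈ E.filter (fun e => e.2 = n), R e = 2) :
    Fintype.card P = Fintype.card N := by
  have h1 := sum_filter_fst E R hwhite Finset.univ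
  have h2 := sum_filter_snd E R hblack Finset.univ
  simp only [Finset.mem_univ, Finset.filter_true] at h1 h2
  have : (2 : ℝ) * (Finset.univ : Finset P).card = 2 * (Finset.univ : Finset N).card := by
    rw [← h1, ← h2]
  have := (mul_left_cancel₀ (by norm_num : (2:ℝ) ≠ 0) this)
  rw [← Finset.card_univ, ← Finset.card_univ]
  exact_mod_cast this

/-- Every edge lies in a perfect matching. -/
lemma exists_pm_through (E : Finset (P × N)) (R : P × N → ℝ)
    (hpos : ∀ e ∈ E, 0 < R e)
    (hwhite : ∀ p : P, ∑ e ∈ E.filter (fun e => e.1 = p), R e = 2)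
    (hblack : ∀ n : N, ∑ e ∈ E.filter (fun e => e.2 = n), R e = 2)
    {e0 : P × N} (he0 : e0 ∈ E) :
    ∃ M : Finset (P × N), IsPerfectMatching E M ∧ e0 ∈ M := by
  classical
  obtain ⟨p0, n0⟩ := e0
  set r' : P → Finset N := fun p => if p = p0 then {n0} else (nbrs E p).erase n0 with hr'
  -- key lemma: Hall condition for sets avoiding p0
  have key : ∀ S : Finset P, p0 ∉ S →
      S.card ≤ (S.biUnion (fun p => (nbrs E p).erase n0)).card := by
    intro S hp0S
    have hbU : S.biUnion (fun p => (nbrs E p).erase n0) = (S.biUnion (nbrs E)).erase n0 := by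
      ext n
      simp only [mem_biUnion, mem_erase]
      tauto
    rw [hbU]
    by_cases hn0 : n0 ∈ S.biUnion (nbrs E)
    · have := hall_strict_s12 E R hpos hwhite hblack he0 (S := S) hp0S hn0
      rw [Finset.card_erase_of_mem hn0]
      omega
    · rw [Finset.erase_eq_of_notMem hn0]
      exact hall_basic E R hpos hwhite hblack S
  have hall : ∀ S : Finset P, S.card ≤ (S.biUnion r').card := by
    intro S
    by_cases hp0S : p0 ∈ S
    · have hkey := key (S.erase p0) (Finset.notMem_erase p0 S)
      have hn0not : n0 ∉ (S.erase p0).biUnion (fun p => (nbrs E p).erase n0) := by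
        simp only [mem_biUnion, mem_erase]
        rintro ⟨p, _, hne, _⟩
        exact hne rfl
      have hbU2 : S.biUnion r' =
          insert n0 ((S.erase p0).biUnion (fun p => (nbrs E p).erase n0)) := by
        ext n
        rw [mem_biUnion, mem_insert, mem_biUnion]
        constructor
        · rintro ⟨p, hp, hn⟩
          by_cases h : p = p0
          · subst h
            rw [show r' p = {n0} by simp [hr']] at hn
            left; exact Finset.mem_singleton.1 hn
          · right
            exact ⟨p, Finset.mem_erase.2 ⟨h, hp⟩, by rwa [show r' p = (nbrs E p).erase n0 by simp [hr', h]] at hn⟩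
        · rintro (rfl | ⟨p, hp, hn⟩)
          · exact ⟨p0, hp0S, by simp [hr']⟩
          · refine ⟨p, Finset.mem_of_mem_erase hp, ?_⟩
            rw [show r' p = (nbrs E p).erase n0 by simp [hr', Finset.ne_of_mem_erase hp]]
            exact hn
      have hcard : #(S.erase p0) + 1 = #S := Finset.card_erase_add_one hp0S
      rw [hbU2, Finset.card_insert_of_notMem hn0not]
      omega
    · have hrest : S.biUnion r' = S.biUnion (fun p => (nbrs E p).erase n0) := by
        apply Finset.biUnion_congr rfl
        intro p hp
        have : p ≠ p0 := fun h => hp0S (h ▸ hp)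
        simp [hr', this]
      rw [hrest]
      exact key S hp0S
  obtain ⟨f, hinj, hf⟩ := (Finset.all_card_le_biUnion_card_iff_exists_injective r').1 hall
  have hfp0 : f p0 = n0 := by
    have := hf p0
    simp [hr'] at this
    exact this
  have hfE : ∀ p, (p, f p) ∈ E := by
    intro p
    have := hf p
    by_cases h : p = p0
    · subst h
      rw [hfp0]
      exact he0
    · simp only [hr', if_neg h] at this
      exact mem_nbrs.1 (Finset.mem_of_mem_erase this)
  have hbij : Function.Bijective f := by
    rw [Fintype.bijective_iff_injective_and_card]
    exact ⟨hinj, card_P_eq_card_N E R hwhite hblack⟩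
  refine ⟨Finset.univ.image (fun p => (p, f p)), ⟨?_, ?_, ?_⟩, ?_⟩
  · intro e he
    simp only [mem_image, mem_univ, true_and] at he
    obtain ⟨p, rfl⟩ := he
    exact hfE p
  · intro p
    have : (Finset.univ.image (fun p => (p, f p))).filter (fun e => e.1 = p) = {(p, f p)} := by
      ext e
      simp only [mem_filter, mem_image, mem_univ, true_and, mem_singleton]
      constructor
      · rintro ⟨⟨q, rfl⟩, h⟩
        simp only at h
        subst h
        rfl
      · rintro rfl
        exact ⟨⟨p, rfl⟩, rfl⟩
    rw [this, Finset.card_singleton]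
  · intro n
    obtain ⟨q, hq⟩ := hbij.2 n
    have : (Finset.univ.image (fun p => (p, f p))).filter (fun e => e.2 = n) = {(q, n)} := by
      ext e
      simp only [mem_filter, mem_image, mem_univ, true_and, mem_singleton]
      constructor
      · rintro ⟨⟨p, rfl⟩, h⟩
        simp only at h
        subst h
        have : p = q := hinj (by rw [hq])
        subst this
        rfl
      · rintro rfl
        exact ⟨⟨q, by rw [hq]⟩, rfl⟩
    rw [this, Finset.card_singleton]
  · simp only [mem_image, mem_univ, true_and]
    exact ⟨p0, by rw [hfp0]⟩

end Aux

/-- A finite connected bipartite graph on at least 4 vertices admitting a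
positive edge-weight function with vertex sums `2` has at least two distinct perfect
matchings. -/
theorem two_perfect_matchings {P N : Type*} [Fintype P] [Fintype N]
    [DecidableEq P] [DecidableEq N]
    (E : Finset (P × N)) (R : P × N → ℝ)
    (hconn : (tilingGraph E).Connected)
    (hbig : 4 ≤ Fintype.card P + Fintype.card N)
    (hpos : ∀ e ∈ E, 0 < R e)
    (hwhite : ∀ p : P, ∑ e ∈ E.filter (fun e => e.1 = p), R e = 2)
    (hblack : ∀ n : N, ∑ e ∈ E.filter (fun e => e.2 = n), R e = 2) :
    ∃ M₁ M₂ : Finset (P × N),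
      IsPerfectMatching E M₁ ∧ IsPerfectMatching E M₂ ∧ M₁ ≠ M₂ := by
  classical
  -- Step 1: there exist two distinct edges sharing a coordinate.
  have hadj : ∀ a b, (tilingGraph E).Adj a b → ∃ p n, (p, n) ∈ E ∧
      ((a = Sum.inl p ∧ b = Sum.inr n) ∨ (b = Sum.inl p ∧ a = Sum.inr n)) := by
    intro a b hab
    rw [tilingGraph, SimpleGraph.fromRel_adj] at hab
    rcases hab.2 with ⟨p, n, hpn, h1, h2⟩ | ⟨p, n, hpn, h1, h2⟩
    · exact ⟨p, n, hpn, Or.inl ⟨h1, h2⟩⟩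
    · exact ⟨p, n, hpn, Or.inr ⟨h1, h2⟩⟩
  have hshare : ∃ e1 ∈ E, ∃ e2 ∈ E, e1 ≠ e2 ∧ (e1.1 = e2.1 ∨ e1.2 = e2.2) := by
    by_contra hcon
    push_neg at hcon
    have huniq : ∀ a b c : P ⊕ N, (tilingGraph E).Adj a b → (tilingGraph E).Adj a c →
        b = c := by
      intro a b c hb hc
      obtain ⟨p, n, hpn, hor1⟩ := hadj a b hb
      obtain ⟨p', n', hpn', hor2⟩ := hadj a c hc
      rcases hor1 with ⟨ha, hb'⟩ | ⟨hb', ha⟩ <;> rcases hor2 with ⟨ha', hc'⟩ | ⟨hc', ha'⟩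
      · -- a = inl p = inl p'
        have hpp : p = p' := by rw [ha] at ha'; exact Sum.inl.inj ha'
        subst hpp
        have : (p, n) = (p, n') := by
          by_contra hne
          exact (hcon (p, n) hpn (p, n') hpn' hne).1 rfl
        simp only [Prod.mk.injEq] at this
        rw [hb', hc', this.2]
      · rw [ha] at ha'; exact absurd ha' (by simp)
      · rw [ha] at ha'; exact absurd ha' (by simp)
      · have hnn : n = n' := by rw [ha] at ha'; exact Sum.inr.inj ha'
        subst hnn
        have : (p, n) = (p', n) := by
          by_contra hne
          exact (hcon (p, n) hpn (p', n) hpn' hne).2 rfl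
        simp only [Prod.mk.injEq] at this
        rw [hb', hc', this.1]
    have hwalk : ∀ (a b : P ⊕ N) (w : (tilingGraph E).Walk a b),
        b = a ∨ (tilingGraph E).Adj a b := by
      intro a b w
      induction w with
      | nil => exact Or.inl rfl
      | @cons a x b h p ih =>
        rcases ih with rfl | hadj' 
        · exact Or.inr h
        · exact Or.inl (huniq x b a hadj' h.symm)
    obtain ⟨v⟩ := hconn.nonempty
    have hall : ∀ u : P ⊕ N, u = v ∨ (tilingGraph E).Adj v u := by
      intro u
      obtain ⟨w⟩ := hconn.preconnected v u
      exact hwalk v u w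
    have hcard : Fintype.card (P ⊕ N) ≤ 2 := by
      by_cases hex : ∃ w0, (tilingGraph E).Adj v w0
      · obtain ⟨w0, hw0⟩ := hex
        have : (Finset.univ : Finset (P ⊕ N)) ⊆ {v, w0} := by
          intro u _
          rcases hall u with rfl | hu
          · exact Finset.mem_insert_self _ _
          · rw [huniq v u w0 hu hw0]
            exact Finset.mem_insert_of_mem (Finset.mem_singleton_self _)
        calc Fintype.card (P ⊕ N) = #(Finset.univ : Finset (P ⊕ N)) :=
              (Finset.card_univ).symm
          _ ≤ #({v, w0} : Finset (P ⊕ N)) := Finset.card_le_card this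
          _ ≤ 2 := Finset.card_insert_le _ _ |>.trans (by simp)
      · have : (Finset.univ : Finset (P ⊕ N)) ⊆ {v} := by
          intro u _
          rcases hall u with rfl | hu
          · exact Finset.mem_singleton_self _
          · exact absurd ⟨u, hu⟩ hex
        calc Fintype.card (P ⊕ N) = #(Finset.univ : Finset (P ⊕ N)) :=
              (Finset.card_univ).symm
          _ ≤ #({v} : Finset (P ⊕ N)) := Finset.card_le_card this
          _ ≤ 2 := by simp
    rw [Fintype.card_sum] at hcard
    omega
  obtain ⟨e1, he1, e2, he2, hne, hsh⟩ := hshare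
  obtain ⟨M₁, hM₁, he1M⟩ := exists_pm_through E R hpos hwhite hblack he1
  obtain ⟨M₂, hM₂, he2M⟩ := exists_pm_through E R hpos hwhite hblack he2
  refine ⟨M₁, M₂, hM₁, hM₂, ?_⟩
  rintro rfl
  rcases hsh with hfst | hsnd
  · have h1 := hM₁.2.1 e1.1
    have hlt : 1 < #(M₁.filter (fun e => e.1 = e1.1)) := by
      apply Finset.one_lt_card.2
      exact ⟨e1, Finset.mem_filter.2 ⟨he1M, rfl⟩, e2,
        Finset.mem_filter.2 ⟨he2M, hfst.symm⟩, hne⟩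
    omega
  · have h1 := hM₁.2.2 e1.2
    have hlt : 1 < #(M₁.filter (fun e => e.2 = e1.2)) := by
      apply Finset.one_lt_card.2
      exact ⟨e1, Finset.mem_filter.2 ⟨he1M, rfl⟩, e2,
        Finset.mem_filter.2 ⟨he2M, hsnd.symm⟩, hne⟩
    omega
end
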